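/- Let P be a distribution of (X,Y) on R^d × {0,1} satisfying the margin assumption MA(α, C0) for some α ≥ 0, C0 > 0. Then for any Borel function η̄: R^d → R, the classifier f̄ = 1{η̄ ≥ 1/2} satisfies R(f̄) − R(f*) ≤ 2 C0 ‖η̄ − η‖_∞^{1+α}, where ‖·‖_∞ denotes the L_∞(R^d, P_X) norm. -/

import Mathlib

open MeasureTheory Metric Set
open scoped ENNReal NNReal

noncomputable section

/-- Feature space: `ℝ^d` with the Euclidean norm. -/
abbrev Euc (d : ℕ) := EuclideanSpace ℝ (Fin d)

/-- A sample of size `n`: `n` points of `ℝ^d × {0,1}` (labels modelled by `Bool`). -/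
abbrev Sample (d n : ℕ) := Fin n → Euc d × Bool

/-- Joint law of `(X,Y)` determined by the marginal `PX` and the regression
function `η(x) = P(Y = 1 | X = x)`. -/
def jointLaw {d : ℕ} (PX : Measure (Euc d)) (η : Euc d → ℝ) : Measure (Euc d × Bool) :=
  PX.bind fun x =>
    ENNReal.ofReal (η x) • Measure.dirac (x, true) +
      ENNReal.ofReal (1 - η x) • Measure.dirac (x, false)

/-- Law `P^{⊗n}` of an i.i.d. sample of size `n`. -/
def sampleLaw {d : ℕ} (PX : Measure (Euc d)) (η : Euc d → ℝ) (n : ℕ) :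
    Measure (Sample d n) :=
  Measure.pi fun _ => jointLaw PX η

/-- Misclassification risk `R(f) = P(Y ≠ f(X))` of a decision rule `f`. -/
def risk {d : ℕ} (PX : Measure (Euc d)) (η : Euc d → ℝ) (f : Euc d → Bool) : ℝ :=
  ∫ x, (if f x then 1 - η x else η x) ∂PX

/-- The Bayes rule `f*(x) = 1{η(x) ≥ 1/2}`. -/
def bayes {d : ℕ} (η : Euc d → ℝ) : Euc d → Bool := fun x => decide ((1 : ℝ) / 2 ≤ η x)

/-- The plug-in rule `1{g ≥ 1/2}` associated with a function `g`. -/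
def plugin {d : ℕ} (g : Euc d → ℝ) : Euc d → Bool := fun x => decide ((1 : ℝ) / 2 ≤ g x)

/-- Margin (low noise) assumption MA(α, C0):
`P_X(0 < |η(X) − 1/2| ≤ t) ≤ C0 t^α` for all `t > 0`. -/
def Margin {d : ℕ} (PX : Measure (Euc d)) (η : Euc d → ℝ) (α C0 : ℝ) : Prop :=
  ∀ t : ℝ, 0 < t →
    PX {x | 0 < |η x - 1 / 2| ∧ |η x - 1 / 2| ≤ t} ≤ ENNReal.ofReal (C0 * t ^ α)

/-- Taylor polynomial of degree `N` of `g` at `x`, evaluated at `x'`. -/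
def taylorPoly {d : ℕ} (g : Euc d → ℝ) (N : ℕ) (x x' : Euc d) : ℝ :=
  ∑ k ∈ Finset.range (N + 1), (k.factorial : ℝ)⁻¹ * iteratedFDeriv ℝ k g x (fun _ => x' - x)

/-- The Hölder class `Σ(β, L, ℝ^d)`: `g` is `⌊β⌋` times continuously differentiable
(`⌊β⌋` = largest integer strictly less than `β`, i.e. `⌈β⌉₊ - 1` for `β > 0`) and its
Taylor polynomial of degree `⌊β⌋` approximates it to order `L‖x − x'‖^β`. -/
def HolderClass {d : ℕ} (β L : ℝ) (g : Euc d → ℝ) : Prop :=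
  ContDiff ℝ (⌈β⌉₊ - 1 : ℕ) g ∧
    ∀ x x' : Euc d, |g x' - taylorPoly g (⌈β⌉₊ - 1) x x'| ≤ L * ‖x' - x‖ ^ β

/-- `(c0, r0)`-regularity of a set `A`:
`λ[A ∩ B(x,r)] ≥ c0 λ[B(x,r)]` for all `0 < r ≤ r0` and `x ∈ A`. -/
def Regular {d : ℕ} (c0 r0 : ℝ) (A : Set (Euc d)) : Prop :=
  ∀ x ∈ A, ∀ r : ℝ, 0 < r → r ≤ r0 →
    ENNReal.ofReal c0 * volume (closedBall x r) ≤ volume (A ∩ closedBall x r)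

/-- Strong density assumption with parameters `(c0, r0, μmin, μmax, K)`. -/
def StrongDensity {d : ℕ} (PX : Measure (Euc d)) (c0 r0 μmin μmax : ℝ)
    (K : Set (Euc d)) : Prop :=
  ∃ A : Set (Euc d), IsCompact A ∧ A ⊆ K ∧ Regular c0 r0 A ∧
    ∃ μ : Euc d → ℝ, Measurable μ ∧ (∀ x ∈ A, μmin ≤ μ x ∧ μ x ≤ μmax) ∧
      (∀ x, x ∉ A → μ x = 0) ∧
      PX = volume.withDensity fun x => ENNReal.ofReal (μ x)

/-- Mild density assumption with parameters `(c0, r0, μmax, K)`. -/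
def MildDensity {d : ℕ} (PX : Measure (Euc d)) (c0 r0 μmax : ℝ)
    (K : Set (Euc d)) : Prop :=
  ∃ A : Set (Euc d), IsCompact A ∧ A ⊆ K ∧ Regular c0 r0 A ∧
    ∃ μ : Euc d → ℝ, Measurable μ ∧ (∀ x ∈ A, 0 ≤ μ x ∧ μ x ≤ μmax) ∧
      (∀ x, x ∉ A → μ x = 0) ∧
      PX = volume.withDensity fun x => ENNReal.ofReal (μ x)

/-- The class `P_Σ(α, C0, β, L, c0, r0, μmin, μmax, K)`, a distribution being encoded
by its marginal `PX` together with its regression function `η`. -/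
def MemPS {d : ℕ} (α C0 β L c0 r0 μmin μmax : ℝ) (K : Set (Euc d))
    (PX : Measure (Euc d)) (η : Euc d → ℝ) : Prop :=
  IsProbabilityMeasure PX ∧ Measurable η ∧ (∀ x, η x ∈ Icc (0 : ℝ) 1) ∧
    Margin PX η α C0 ∧ HolderClass β L η ∧ StrongDensity PX c0 r0 μmin μmax K

/-- Topological support of a measure on `ℝ^d`. -/
def msupport {d : ℕ} (PX : Measure (Euc d)) : Set (Euc d) :=
  {x | ∀ r : ℝ, 0 < r → 0 < PX (ball x r)}

/-- `f` hits the level `a` at `x0`. -/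
def Hits {d : ℕ} (f : Euc d → ℝ) (a : ℝ) (x0 : Euc d) : Prop :=
  f x0 = a ∧ ∀ r : ℝ, 0 < r → ∃ x ∈ closedBall x0 r, f x ≠ a

/-- `f` crosses the level `a` at `x0`. -/
def Crosses {d : ℕ} (f : Euc d → ℝ) (a : ℝ) (x0 : Euc d) : Prop :=
  ∀ r : ℝ, 0 < r → (∃ x ∈ closedBall x0 r, f x < a) ∧ ∃ x ∈ closedBall x0 r, a < f x

/-- Expected excess risk `E[R(f̂_n)] − R(f*)` of a plug-in classifier built from the
estimator `hatη` of the regression function. -/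
def expExcess {d : ℕ} (PX : Measure (Euc d)) (η : Euc d → ℝ) {n : ℕ}
    (hatη : Sample d n → Euc d → ℝ) : ℝ :=
  (∫ ω, risk PX η (plugin (hatη ω)) ∂sampleLaw PX η n) - risk PX η (bayes η)

/-- Expected excess risk `E[R(f̂_n)] − R(f*)` of a (general) classifier. -/
def expExcessRule {d : ℕ} (PX : Measure (Euc d)) (η : Euc d → ℝ) {n : ℕ}
    (fhat : Sample d n → Euc d → Bool) : ℝ :=
  (∫ ω, risk PX η (fhat ω) ∂sampleLaw PX η n) - risk PX η (bayes η)

/-- Empirical misclassification risk of the plug-in rule `1{g ≥ 1/2}` on a sample. -/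
def empRisk {d n : ℕ} (ω : Sample d n) (g : Euc d → ℝ) : ℝ :=
  (n : ℝ)⁻¹ * ∑ i : Fin n, if plugin g (ω i).1 ≠ (ω i).2 then (1 : ℝ) else 0

/-- Lemma 5.1, inequality (5.1). Under MA(α, C0), for any Borel `η̄`,
the plug-in rule `f̄ = 1{η̄ ≥ 1/2}` satisfies
`R(f̄) − R(f*) ≤ 2 C0 ‖η̄ − η‖_∞^{1+α}` (the `L_∞(ℝ^d, P_X)` norm). -/
theorem stmt14 (d : ℕ) (α C0 : ℝ) (hα : 0 ≤ α) (hC0 : 0 < C0)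
    (PX : Measure (Euc d)) (η : Euc d → ℝ)
    (hP : IsProbabilityMeasure PX) (hη : Measurable η) (hη1 : ∀ x, η x ∈ Icc (0 : ℝ) 1)
    (hMA : Margin PX η α C0) (bη : Euc d → ℝ) (hbη : Measurable bη) :
    ENNReal.ofReal (risk PX η (plugin bη) - risk PX η (bayes η)) ≤
      ENNReal.ofReal (2 * C0) * eLpNorm (fun x => bη x - η x) ⊤ PX ^ (1 + α) := by
  classical
  have hint : ∀ g : Euc d → ℝ, Measurable g →
      Integrable (fun x => if (1:ℝ)/2 ≤ g x then 1 - η x else η x) PX := by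
    intro g hg
    have hm : Measurable (fun x => if (1:ℝ)/2 ≤ g x then 1 - η x else η x) :=
      Measurable.ite (measurableSet_le measurable_const hg) (measurable_const.sub hη) hη
    refine (integrable_const (1:ℝ)).mono' hm.aestronglyMeasurable ?_
    filter_upwards with x
    have h0 := (hη1 x).1; have h1 := (hη1 x).2
    by_cases h : (1:ℝ)/2 ≤ g x <;>
      simp only [h, if_true, if_false, Real.norm_eq_abs, abs_le] <;>
      constructor <;> linarith
  have hrisk1 : risk PX η (plugin bη)
      = ∫ x, (if (1:ℝ)/2 ≤ bη x then 1 - η x else η x) ∂PX := by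
    unfold risk plugin; simp only [decide_eq_true_eq]
  have hrisk2 : risk PX η (bayes η)
      = ∫ x, (if (1:ℝ)/2 ≤ η x then 1 - η x else η x) ∂PX := by
    unfold risk bayes; simp only [decide_eq_true_eq]
  set δ := eLpNorm (fun x => bη x - η x) ⊤ PX with hδdef
  by_cases hδtop : δ = ⊤
  · rw [hδtop, ENNReal.top_rpow_of_pos (by linarith : (0:ℝ) < 1 + α),
      ENNReal.mul_top (by simp [hC0.le, hC0] : ENNReal.ofReal (2 * C0) ≠ 0)]
    exact le_top
  · set t := δ.toReal with ht
    have htnn : 0 ≤ t := ENNReal.toReal_nonneg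
    have hδt : δ = ENNReal.ofReal t := (ENNReal.ofReal_toReal hδtop).symm
    have hae : ∀ᵐ x ∂PX, |bη x - η x| ≤ t := by
      have h : ∀ᵐ x ∂PX, (‖bη x - η x‖₊ : ℝ≥0∞) ≤ eLpNormEssSup (fun x => bη x - η x) PX :=
        ae_le_eLpNormEssSup
      have heq : eLpNormEssSup (fun x => bη x - η x) PX = δ := by
        rw [hδdef, eLpNorm_exponent_top]
      filter_upwards [h] with x hx
      rw [heq, hδt, ← ENNReal.ofReal_coe_nnreal, coe_nnnorm,
        ENNReal.ofReal_le_ofReal_iff htnn] at hx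
      simpa [Real.norm_eq_abs] using hx
    set S : Set (Euc d) := {x | 0 < |η x - 1/2| ∧ |η x - 1/2| ≤ t} with hSdef
    have hS : MeasurableSet S := by
      have : S = {x | 0 < |η x - 1/2|} ∩ {x | |η x - 1/2| ≤ t} := rfl
      rw [this]
      exact (measurableSet_lt measurable_const ((hη.sub measurable_const).abs)).inter
        (measurableSet_le ((hη.sub measurable_const).abs) measurable_const)
    have hpt : ∀ x, |bη x - η x| ≤ t →
        (if (1:ℝ)/2 ≤ bη x then 1 - η x else η x) - (if (1:ℝ)/2 ≤ η x then 1 - η x else η x)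
          ≤ S.indicator (fun _ => 2*t) x := by
      intro x hx
      have hind : (0:ℝ) ≤ S.indicator (fun _ => 2*t) x :=
        Set.indicator_nonneg (fun _ _ => by linarith) x
      by_cases hb : (1:ℝ)/2 ≤ bη x <;> by_cases he : (1:ℝ)/2 ≤ η x
      · rw [if_pos hb, if_pos he]; linarith
      · push_neg at he
        have h1 : |η x - 1/2| = 1/2 - η x := by
          rw [abs_of_neg (by linarith)]; ring
        have h2 : bη x - η x ≤ t := (le_abs_self _).trans hx
        have hmem : x ∈ S := ⟨by rw [h1]; linarith, by rw [h1]; linarith⟩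
        rw [Set.indicator_of_mem hmem]
        rw [if_pos hb, if_neg (not_le.mpr he)]
        linarith
      · push_neg at hb
        rcases eq_or_lt_of_le he with heq | hlt
        · rw [if_neg (not_le.mpr hb), if_pos he]
          have : η x - (1 - η x) = 0 := by rw [← heq]; norm_num
          linarith
        · have h1 : |η x - 1/2| = η x - 1/2 := abs_of_pos (by linarith)
          have h2 : η x - bη x ≤ t := by
            have := neg_le_abs (bη x - η x); linarith
          have hmem : x ∈ S := ⟨by rw [h1]; linarith, by rw [h1]; linarith⟩
          rw [Set.indicator_of_mem hmem, if_neg (not_le.mpr hb), if_pos he]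
          linarith
      · rw [if_neg hb, if_neg he]; linarith
    have hGint : Integrable (S.indicator fun _ => 2*t) PX := (integrable_const _).indicator hS
    have hPS : (PX S).toReal * (2*t) ≤ 2 * C0 * t ^ (1+α) := by
      rcases eq_or_lt_of_le htnn with h0 | hpos
      · rw [← h0, Real.zero_rpow (by linarith : (1:ℝ) + α ≠ 0)]; simp
      · have h1 : (PX S).toReal ≤ C0 * t ^ α :=
          ENNReal.toReal_le_of_le_ofReal (by positivity) (hMA t hpos)
        have h2 : t ^ ((1:ℝ)+α) = t * t ^ α := by
          rw [Real.rpow_add hpos, Real.rpow_one]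
        have h3 : (0:ℝ) ≤ 2 * t := by linarith
        calc (PX S).toReal * (2*t) ≤ (C0 * t ^ α) * (2*t) := by
              apply mul_le_mul_of_nonneg_right h1 h3
          _ = 2 * C0 * t ^ ((1:ℝ)+α) := by rw [h2]; ring
    have hineq : risk PX η (plugin bη) - risk PX η (bayes η) ≤ 2 * C0 * t ^ (1+α) := by
      rw [hrisk1, hrisk2, ← integral_sub (hint bη hbη) (hint η hη)]
      have h1 : ∫ x, ((if (1:ℝ)/2 ≤ bη x then 1 - η x else η x)
            - (if (1:ℝ)/2 ≤ η x then 1 - η x else η x)) ∂PX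
          ≤ ∫ x, S.indicator (fun _ => 2*t) x ∂PX :=
        integral_mono_ae ((hint bη hbη).sub (hint η hη)) hGint
          (hae.mono fun x hx => hpt x hx)
      have h2 : ∫ x, S.indicator (fun _ => 2*t) x ∂PX = (PX S).toReal * (2*t) := by
        rw [integral_indicator_const _ hS, smul_eq_mul]; rfl
      calc _ ≤ ∫ x, S.indicator (fun _ => 2*t) x ∂PX := h1
        _ = (PX S).toReal * (2*t) := h2
        _ ≤ 2 * C0 * t ^ (1+α) := hPS
    calc ENNReal.ofReal (risk PX η (plugin bη) - risk PX η (bayes η))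
        ≤ ENNReal.ofReal (2 * C0 * t ^ (1+α)) := ENNReal.ofReal_le_ofReal hineq
      _ = ENNReal.ofReal (2*C0) * ENNReal.ofReal (t ^ (1+α)) := by
          rw [ENNReal.ofReal_mul (by positivity)]
      _ = ENNReal.ofReal (2*C0) * (ENNReal.ofReal t) ^ (1+α) := by
          rw [ENNReal.ofReal_rpow_of_nonneg htnn (by linarith)]
      _ = ENNReal.ofReal (2*C0) * δ ^ (1+α) := by rw [hδt]

end
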